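/- Let A be a finite set and let H ⊆ A × A be the edge set of a directed graph on A. Let B be the set of bridge edges of H, and for every strongly connected component S of H choose a maximal child C_S of the edge set H ∩ (S × S). Then the edge set B ∪ ⋃_S C_S (the union taken over all strongly connected components S of H) is acyclic. -/

import Mathlib

/-- The edge relation of an edge set `E ⊆ A × A`. -/
def EdgeRel {A : Type*} (E : Set (A × A)) : A → A → Prop := fun u v => (u, v) ∈ E

/-- An edge set is acyclic if no vertex has a path of length ≥ 1 back to itself. -/
def AcyclicEdges {A : Type*} (E : Set (A × A)) : Prop :=
  ∀ a : A, ¬ Relation.TransGen (EdgeRel E) a a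

/-- Two vertices are strongly connected in `E` if they are equal or there are paths
of length ≥ 1 both ways. -/
def StronglyConn {A : Type*} (E : Set (A × A)) (u v : A) : Prop :=
  u = v ∨ (Relation.TransGen (EdgeRel E) u v ∧ Relation.TransGen (EdgeRel E) v u)

/-- `S` is a strongly connected component of `E`: an equivalence class of the
strongly-connected relation. -/
def IsSCC {A : Type*} (E : Set (A × A)) (S : Set A) : Prop :=
  ∃ a : A, S = {b : A | StronglyConn E a b}

/-- The bridge edges of `E`: edges whose endpoints are not strongly connected in `E`. -/
def BridgeEdges {A : Type*} (E : Set (A × A)) : Set (A × A) :=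
  {e | e ∈ E ∧ ¬ StronglyConn E e.1 e.2}

/-- `C` is a maximal child of the directed graph with edge set `H`. -/
def MaximalChild {A : Type*} (H C : Set (A × A)) : Prop :=
  C ⊆ H ∧ AcyclicEdges C ∧ ∀ e ∈ H \ C, ¬ AcyclicEdges (C ∪ {e})

lemma sc_symm {A : Type*} {E : Set (A × A)} {u v : A}
    (h : StronglyConn E u v) : StronglyConn E v u := by
  rcases h with rfl | ⟨h1, h2⟩
  · exact Or.inl rfl
  · exact Or.inr ⟨h2, h1⟩

lemma sc_trans {A : Type*} {E : Set (A × A)} {u v w : A}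
    (h1 : StronglyConn E u v) (h2 : StronglyConn E v w) : StronglyConn E u w := by
  rcases h1 with rfl | ⟨a1, a2⟩
  · exact h2
  rcases h2 with rfl | ⟨b1, b2⟩
  · exact Or.inr ⟨a1, a2⟩
  · exact Or.inr ⟨a1.trans b1, b2.trans a2⟩

lemma cycle_restrict {A : Type*} {r : A → A → Prop} {a x y : A}
    (hax : Relation.ReflTransGen r a x) (hxy : Relation.TransGen r x y) :
    Relation.TransGen r y a →
      Relation.TransGen (fun p q => r p q ∧
        (Relation.ReflTransGen r a p ∧ Relation.ReflTransGen r p a) ∧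
        (Relation.ReflTransGen r a q ∧ Relation.ReflTransGen r q a)) x y := by
  induction hxy with
  | single h =>
      intro hya
      exact Relation.TransGen.single
        ⟨h, ⟨hax, (Relation.TransGen.head h hya).to_reflTransGen⟩,
          ⟨hax.trans (Relation.ReflTransGen.single h), hya.to_reflTransGen⟩⟩
  | tail hxb h ih =>
      intro hya
      exact (ih (Relation.TransGen.head h hya)).tail
        ⟨h, ⟨hax.trans hxb.to_reflTransGen,
              (Relation.TransGen.head h hya).to_reflTransGen⟩,
          ⟨hax.trans (hxb.tail h).to_reflTransGen, hya.to_reflTransGen⟩⟩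

theorem bridges_union_sccMaxChildren_acyclic {A : Type*} [Fintype A]
    (H : Set (A × A)) (Cc : Set A → Set (A × A))
    (hCc : ∀ S : Set A, IsSCC H S → MaximalChild (H ∩ S ×ˢ S) (Cc S)) :
    AcyclicEdges (BridgeEdges H ∪ ⋃ S ∈ {S : Set A | IsSCC H S}, Cc S) := by
  intro a hcyc
  set E' : Set (A × A) := BridgeEdges H ∪ ⋃ S ∈ {S : Set A | IsSCC H S}, Cc S with hE'
  have hsub : E' ⊆ H := by
    intro e he
    rcases he with he | he
    · exact he.1
    · simp only [Set.mem_iUnion, Set.mem_setOf_eq] at he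
      obtain ⟨S, hS, heS⟩ := he
      exact ((hCc S hS).1 heS).1
  set S : Set A := {b | StronglyConn H a b} with hSdef
  have hS : IsSCC H S := ⟨a, rfl⟩
  have hmc := hCc S hS
  apply hmc.2.1 a
  have key := cycle_restrict (r := EdgeRel E') (a := a) (Relation.ReflTransGen.refl) hcyc hcyc
  refine Relation.TransGen.mono ?_ _ _ key
  rintro p q ⟨hpq, ⟨hap, hpa⟩, ⟨haq, hqa⟩⟩
  have hscH : ∀ z : A, Relation.ReflTransGen (EdgeRel E') a z →
      Relation.ReflTransGen (EdgeRel E') z a → StronglyConn H a z := by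
    intro z h1 h2
    by_cases hz : z = a
    · exact Or.inl hz.symm
    · rcases Relation.reflTransGen_iff_eq_or_transGen.mp h1 with heq | h1'
      · exact absurd heq hz
      rcases Relation.reflTransGen_iff_eq_or_transGen.mp h2 with heq | h2'
      · exact absurd heq.symm hz
      exact Or.inr ⟨Relation.TransGen.mono (fun x y h => hsub h) _ _ h1', Relation.TransGen.mono (fun x y h => hsub h) _ _ h2'⟩
  have hax : StronglyConn H a p := hscH p hap hpa
  have hay : StronglyConn H a q := hscH q haq hqa
  rcases hpq with hb | hc
  · exact absurd (sc_trans (sc_symm hax) hay) hb.2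
  · simp only [Set.mem_iUnion, Set.mem_setOf_eq] at hc
    obtain ⟨T, hT, hpqT⟩ := hc
    obtain ⟨t, rfl⟩ := hT
    have hmem := (hCc _ ⟨t, rfl⟩).1 hpqT
    have hpT : StronglyConn H t p := hmem.2.1
    have hTS : {b | StronglyConn H t b} = S := by
      ext b
      constructor
      · intro hb; exact sc_trans (sc_trans hax (sc_symm hpT)) hb
      · intro hb; exact sc_trans (sc_trans hpT (sc_symm hax)) hb
    rwa [hTS] at hpqT
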